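/- Let c > 0, σ > 0, δ ∈ (0, 1), and let V(δ) > 0 solve 1/c = 1/V² − δ/(V+σ²)². Then the steady-state payoff Ψ(δ) = V(δ) + c·(1/V(δ) − 1/(V(δ)+σ²)) is strictly decreasing in δ. -/

import Mathlib

set_option maxHeartbeats 1000000

theorem stmt10 (c σ : ℝ) (hc : 0 < c) (hσ : 0 < σ)
    (δ₁ δ₂ : ℝ) (hδ₁ : δ₁ ∈ Set.Ioo (0 : ℝ) 1) (hδ₂ : δ₂ ∈ Set.Ioo (0 : ℝ) 1)
    (hlt : δ₁ < δ₂) (V₁ V₂ : ℝ) (hV₁ : 0 < V₁) (hV₂ : 0 < V₂)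
    (heq₁ : 1 / c = 1 / V₁ ^ 2 - δ₁ / (V₁ + σ ^ 2) ^ 2)
    (heq₂ : 1 / c = 1 / V₂ ^ 2 - δ₂ / (V₂ + σ ^ 2) ^ 2) :
    V₂ + c * (1 / V₂ - 1 / (V₂ + σ ^ 2)) < V₁ + c * (1 / V₁ - 1 / (V₁ + σ ^ 2)) := by
  obtain ⟨hδ₁0, hδ₁1⟩ := hδ₁
  obtain ⟨hδ₂0, hδ₂1⟩ := hδ₂
  have hA₁ : 0 < V₁ + σ ^ 2 := by positivity
  have hA₂ : 0 < V₂ + σ ^ 2 := by positivity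
  set a₁ : ℝ := 1 / V₁ with ha₁
  set a₂ : ℝ := 1 / V₂ with ha₂
  set b₁ : ℝ := 1 / (V₁ + σ ^ 2) with hb₁
  set b₂ : ℝ := 1 / (V₂ + σ ^ 2) with hb₂
  have hb₁pos : 0 < b₁ := by positivity
  have hb₂pos : 0 < b₂ := by positivity
  have hba₁ : b₁ < a₁ := by
    rw [ha₁, hb₁]
    apply one_div_lt_one_div_of_lt hV₁
    have : (0:ℝ) < σ ^ 2 := by positivity
    linarith
  have hba₂ : b₂ < a₂ := by
    rw [ha₂, hb₂]
    apply one_div_lt_one_div_of_lt hV₂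
    have : (0:ℝ) < σ ^ 2 := by positivity
    linarith
  have e₁ : 1 / c = a₁ ^ 2 - δ₁ * b₁ ^ 2 := by
    rw [heq₁, ha₁, hb₁]; field_simp
  have e₂ : 1 / c = a₂ ^ 2 - δ₂ * b₂ ^ 2 := by
    rw [heq₂, ha₂, hb₂]; field_simp
  have ce₁ : c * (a₁ ^ 2 - δ₁ * b₁ ^ 2) = 1 := by
    field_simp at e₁; linarith
  have ce₂ : c * (a₂ ^ 2 - δ₂ * b₂ ^ 2) = 1 := by
    field_simp at e₂; linarith
  have rel_a : a₁ - a₂ = (V₂ - V₁) * (a₁ * a₂) := by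
    rw [ha₁, ha₂]; field_simp
  have rel_b : b₁ - b₂ = (V₂ - V₁) * (b₁ * b₂) := by
    rw [hb₁, hb₂]; field_simp; ring
  have hab : b₁ * b₂ < a₁ * a₂ :=
    mul_lt_mul'' hba₁ hba₂ hb₁pos.le hb₂pos.le
  -- Step 1: V₂ < V₁
  have hV21 : V₂ < V₁ := by
    by_contra h
    push_neg at h
    have hd : V₂ - V₁ ≥ 0 := by linarith
    have h1 : b₁ - b₂ ≤ a₁ - a₂ := by
      rw [rel_a, rel_b]
      apply mul_le_mul_of_nonneg_left hab.le hd
    have h2 : 0 ≤ b₁ - b₂ := by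
      rw [rel_b]; exact mul_nonneg hd (by positivity)
    have h02 : 0 ≤ a₁ - a₂ := le_trans h2 h1
    have hsq0 : (b₁ - b₂) * (b₁ + b₂) ≤ (a₁ - a₂) * (a₁ + a₂) :=
      mul_le_mul h1 (by linarith) (by positivity) h02
    have hsq : b₁ ^ 2 - b₂ ^ 2 ≤ a₁ ^ 2 - a₂ ^ 2 := by
      have ea : (a₁ - a₂) * (a₁ + a₂) = a₁ ^ 2 - a₂ ^ 2 := by ring
      have eb : (b₁ - b₂) * (b₁ + b₂) = b₁ ^ 2 - b₂ ^ 2 := by ring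
      rw [ea, eb] at hsq0; exact hsq0
    have eqd : a₁ ^ 2 - a₂ ^ 2 = δ₁ * b₁ ^ 2 - δ₂ * b₂ ^ 2 := by linarith [e₁, e₂]
    have t1 : δ₁ * b₁ ^ 2 < δ₂ * b₁ ^ 2 :=
      mul_lt_mul_of_pos_right hlt (pow_pos hb₁pos 2)
    have hbsq : b₂ ^ 2 ≤ b₁ ^ 2 := pow_le_pow_left₀ hb₂pos.le (by linarith) 2
    have t2 : (0:ℝ) ≤ (1 - δ₂) * (b₁ ^ 2 - b₂ ^ 2) :=
      mul_nonneg (by linarith) (by linarith)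
    have t2' : δ₂ * b₁ ^ 2 - δ₂ * b₂ ^ 2 ≤ b₁ ^ 2 - b₂ ^ 2 := by
      have expand : (1 - δ₂) * (b₁ ^ 2 - b₂ ^ 2)
          = (b₁ ^ 2 - b₂ ^ 2) - (δ₂ * b₁ ^ 2 - δ₂ * b₂ ^ 2) := by ring
      linarith [t2, expand]
    linarith [eqd, t1, t2', hsq]
  -- Step 2: mixed bound c*(a₁a₂ - b₁b₂) < 1
  have bound₁ : c * (a₁ ^ 2 - b₁ ^ 2) < 1 := by
    have idb : c * (a₁ ^ 2 - b₁ ^ 2)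
        = c * (a₁ ^ 2 - δ₁ * b₁ ^ 2) - c * ((1 - δ₁) * b₁ ^ 2) := by ring
    have hp : 0 < c * ((1 - δ₁) * b₁ ^ 2) :=
      mul_pos hc (mul_pos (by linarith) (pow_pos hb₁pos 2))
    linarith [idb, ce₁, hp]
  have bound₂ : c * (a₂ ^ 2 - b₂ ^ 2) < 1 := by
    have idb : c * (a₂ ^ 2 - b₂ ^ 2)
        = c * (a₂ ^ 2 - δ₂ * b₂ ^ 2) - c * ((1 - δ₂) * b₂ ^ 2) := by ring
    have hp : 0 < c * ((1 - δ₂) * b₂ ^ 2) :=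
      mul_pos hc (mul_pos (by linarith) (pow_pos hb₂pos 2))
    linarith [idb, ce₂, hp]
  have hsqd : (b₁ - b₂) ^ 2 ≤ (a₁ - a₂) ^ 2 := by
    have h1 : a₂ - a₁ = (V₁ - V₂) * (a₁ * a₂) := by linarith [rel_a]
    have h2 : b₂ - b₁ = (V₁ - V₂) * (b₁ * b₂) := by linarith [rel_b]
    have h3 : 0 ≤ b₂ - b₁ := by
      rw [h2]; exact mul_nonneg (by linarith) (by positivity)
    have h4 : b₂ - b₁ ≤ a₂ - a₁ := by
      rw [h1, h2]
      exact mul_le_mul_of_nonneg_left hab.le (by linarith)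
    have h5 : (b₂ - b₁) * (b₂ - b₁) ≤ (a₂ - a₁) * (a₂ - a₁) :=
      mul_le_mul h4 h4 h3 (by linarith)
    calc (b₁ - b₂) ^ 2 = (b₂ - b₁) * (b₂ - b₁) := by ring
      _ ≤ (a₂ - a₁) * (a₂ - a₁) := h5
      _ = (a₁ - a₂) ^ 2 := by ring
  have hmixed : c * (a₁ * a₂ - b₁ * b₂) < 1 := by
    have idm : 2 * (c * (a₁ * a₂ - b₁ * b₂))
        = c * (a₁ ^ 2 - b₁ ^ 2) + c * (a₂ ^ 2 - b₂ ^ 2)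
          - c * ((a₁ - a₂) ^ 2 - (b₁ - b₂) ^ 2) := by ring
    have hp : 0 ≤ c * ((a₁ - a₂) ^ 2 - (b₁ - b₂) ^ 2) :=
      mul_nonneg hc.le (by linarith)
    linarith [idm, bound₁, bound₂, hp]
  -- Final step
  have hfac : 0 < (V₁ - V₂) * (1 - c * (a₁ * a₂ - b₁ * b₂)) :=
    mul_pos (by linarith) (by linarith)
  have hexp : (V₁ - V₂) * (1 - c * (a₁ * a₂ - b₁ * b₂))
      = (V₁ - V₂) - c * ((V₁ - V₂) * (a₁ * a₂)) + c * ((V₁ - V₂) * (b₁ * b₂)) := by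
    ring
  have id1 : c * (a₁ - a₂) = -(c * ((V₁ - V₂) * (a₁ * a₂))) := by rw [rel_a]; ring
  have id2 : c * (b₁ - b₂) = -(c * ((V₁ - V₂) * (b₁ * b₂))) := by rw [rel_b]; ring
  linarith [hfac, hexp, id1, id2]
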